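/- Let f : ℝⁿ → ℝ be continuously differentiable and ρ-strongly convex for some ρ > 0, let A ∈ ℝ^{m×n} satisfy a_min I_m ⪯ AAᵀ for some a_min > 0, and let b ∈ ℝᵐ. Then there exists a unique pair (x⋆, ξ⋆) ∈ ℝⁿ × ℝᵐ satisfying ∇f(x⋆) + Aᵀξ⋆ = 0 and Ax⋆ = b; in particular, the affine PID saddle-point flow has a unique equilibrium, and x⋆ is the unique global minimizer of f over {x : Ax = b}. -/

import Mathlib

open Matrix
open scoped RealInnerProductSpace

lemma aux_dir {E : Type*} [NormedAddCommGroup E] [InnerProductSpace ℝ E] [CompleteSpace E]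
    {f : E → ℝ} {x : E} (v : E) (hf : DifferentiableAt ℝ f x) :
    HasDerivAt (fun t : ℝ => f (x + t • v)) ⟪gradient f x, v⟫ 0 := by
  have h1 : HasDerivAt (fun t : ℝ => x + t • v) v 0 := by
    simpa using ((hasDerivAt_id (0:ℝ)).smul_const v).const_add x
  have hx : x = x + (0:ℝ) • v := by simp
  rw [hx] at hf
  have h2 := (hf.hasGradientAt.hasFDerivAt.comp_hasDerivAt 0 h1 :
    HasDerivAt (fun t : ℝ => f (x + t • v)) _ 0)
  simpa [InnerProductSpace.toDual_apply_apply, Function.comp_def] using h2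

lemma aux_sc {E : Type*} [NormedAddCommGroup E] [InnerProductSpace ℝ E] [CompleteSpace E]
    {f : E → ℝ} {ρ : ℝ} (hf : ContDiff ℝ 1 f)
    (hsc : ConvexOn ℝ Set.univ (fun x : E => f x - ρ / 2 * ‖x‖ ^ 2))
    (x y : E) :
    f x + ⟪gradient f x, y - x⟫ + ρ / 2 * ‖y - x‖ ^ 2 ≤ f y := by
  set v := y - x with hv
  set φ : ℝ → ℝ := fun t => f (x + t • v) - ρ / 2 * ‖x + t • v‖ ^ 2 with hφ
  have hconv : ConvexOn ℝ Set.univ φ := by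
    have := hsc.comp_affineMap (AffineMap.lineMap x y : ℝ →ᵃ[ℝ] E)
    have heq : (fun x : E => f x - ρ / 2 * ‖x‖ ^ 2) ∘ (AffineMap.lineMap x y : ℝ →ᵃ[ℝ] E) = φ := by
      funext t
      have hl : (AffineMap.lineMap x y : ℝ →ᵃ[ℝ] E) t = x + t • v := by
        rw [AffineMap.lineMap_apply_module]
        module
      simp only [Function.comp_apply, hl, φ]
    rw [heq] at this
    simpa using this
  have hnorm : ∀ t : ℝ, ‖x + t • v‖ ^ 2 = ‖x‖ ^ 2 + 2 * (t * ⟪x, v⟫) + t ^ 2 * ‖v‖ ^ 2 := by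
    intro t
    rw [norm_add_sq_real, real_inner_smul_right, norm_smul]
    rw [mul_pow, Real.norm_eq_abs, sq_abs]
  have hpoly2 : HasDerivAt (fun t : ℝ => ρ / 2 * (‖x‖ ^ 2 + 2 * (t * ⟪x, v⟫) + t ^ 2 * ‖v‖ ^ 2))
      (ρ * ⟪x, v⟫) 0 := by
    have hcomb := ((((hasDerivAt_const (0:ℝ) (‖x‖^2)).add
      (((hasDerivAt_id (0:ℝ)).mul_const (⟪x, v⟫)).const_mul 2)).add
      ((hasDerivAt_pow 2 (0:ℝ)).mul_const (‖v‖^2)))).const_mul (ρ/2)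
    have e : ρ * ⟪x, v⟫ = ρ / 2 * (0 + 2 * (1 * ⟪x, v⟫) + ((2:ℕ):ℝ) * 0 ^ (2 - 1) * ‖v‖ ^ 2) := by
      norm_num; ring
    rw [e]; exact hcomb
  have h2 : HasDerivAt (fun t : ℝ => ρ / 2 * ‖x + t • v‖ ^ 2) (ρ * ⟪x, v⟫) 0 := by
    have hfun : (fun t : ℝ => ρ / 2 * ‖x + t • v‖ ^ 2)
        = fun t : ℝ => ρ / 2 * (‖x‖ ^ 2 + 2 * (t * ⟪x, v⟫) + t ^ 2 * ‖v‖ ^ 2) := by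
      funext t; rw [hnorm]
    rw [hfun]; exact hpoly2
  have h1 := aux_dir v ((hf.differentiable one_ne_zero) x)
  have hφd : HasDerivAt φ (⟪gradient f x, v⟫ - ρ * ⟪x, v⟫) 0 := h1.sub h2
  have hslope := hconv.le_slope_of_hasDerivAt (Set.mem_univ 0) (Set.mem_univ 1) zero_lt_one hφd
  rw [slope_def_field] at hslope
  have hφ1 : φ 1 = f y - ρ / 2 * ‖y‖ ^ 2 := by simp [φ, v]
  have hφ0 : φ 0 = f x - ρ / 2 * ‖x‖ ^ 2 := by simp [φ]
  rw [hφ1, hφ0] at hslope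
  have e1 : ⟪x, v⟫ = ⟪x, y⟫ - ‖x‖ ^ 2 := by
    rw [hv, inner_sub_right, real_inner_self_eq_norm_sq]
  have e2 : ‖v‖ ^ 2 = ‖y‖ ^ 2 - 2 * ⟪x, y⟫ + ‖x‖ ^ 2 := by
    rw [hv, norm_sub_sq_real, real_inner_comm]
  rw [e1] at hslope
  rw [e2]
  norm_num at hslope
  have e5 : (fderiv ℝ f x) v = ⟪gradient f x, v⟫ := by simp
  linarith

set_option maxHeartbeats 1000000 in
/-- For `f` continuously differentiable and `ρ`-strongly convex (`ρ > 0`),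
and `A` with `a_min I_m ⪯ AAᵀ` (`a_min > 0`), there is a unique pair `(x⋆, ξ⋆)` with
`∇f(x⋆) + Aᵀξ⋆ = 0` and `Ax⋆ = b`; moreover `x⋆` is the unique global minimizer of `f`
over `{x : Ax = b}`. -/
theorem stmt8 {n m : ℕ}
    (f : EuclideanSpace ℝ (Fin n) → ℝ) (hf : ContDiff ℝ 1 f)
    (ρ : ℝ) (hρ : 0 < ρ)
    (hsc : ConvexOn ℝ Set.univ (fun x : EuclideanSpace ℝ (Fin n) => f x - ρ / 2 * ‖x‖ ^ 2))
    (A : Matrix (Fin m) (Fin n) ℝ) (amin : ℝ) (hamin : 0 < amin)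
    (hA : (A * Aᵀ - amin • 1).PosSemidef)
    (b : EuclideanSpace ℝ (Fin m)) :
    ∃ p : EuclideanSpace ℝ (Fin n) × EuclideanSpace ℝ (Fin m),
      (gradient f p.1 + Matrix.toEuclideanLin Aᵀ p.2 = 0 ∧
        Matrix.toEuclideanLin A p.1 = b) ∧
      (∀ q : EuclideanSpace ℝ (Fin n) × EuclideanSpace ℝ (Fin m),
        gradient f q.1 + Matrix.toEuclideanLin Aᵀ q.2 = 0 →
        Matrix.toEuclideanLin A q.1 = b → q = p) ∧
      (∀ x : EuclideanSpace ℝ (Fin n),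
        Matrix.toEuclideanLin A x = b → x ≠ p.1 → f p.1 < f x) := by
  set T : EuclideanSpace ℝ (Fin n) →ₗ[ℝ] EuclideanSpace ℝ (Fin m) := Matrix.toEuclideanLin A with hT
  set Tt : EuclideanSpace ℝ (Fin m) →ₗ[ℝ] EuclideanSpace ℝ (Fin n) := Matrix.toEuclideanLin Aᵀ with hTt
  have hadjeq : Tt = LinearMap.adjoint T := by
    rw [hTt, hT, ← Matrix.toEuclideanLin_conjTranspose_eq_adjoint,
      Matrix.conjTranspose_eq_transpose_of_trivial]
  have adj : ∀ (u : EuclideanSpace ℝ (Fin m)) (z : EuclideanSpace ℝ (Fin n)),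
      ⟪Tt u, z⟫ = ⟪u, T z⟫ := by
    intro u z
    rw [hadjeq, LinearMap.adjoint_inner_left]
  have hkey : ∀ u : EuclideanSpace ℝ (Fin m), amin * ⟪u, u⟫ ≤ ⟪Tt u, Tt u⟫ := by
    intro u
    have h0 := hA.dotProduct_mulVec_nonneg (WithLp.equiv 2 (Fin m → ℝ) u)
    set w := WithLp.equiv 2 (Fin m → ℝ) u with hw
    rw [star_trivial, Matrix.sub_mulVec, dotProduct_sub] at h0
    have e1 : w ⬝ᵥ (A * Aᵀ) *ᵥ w = (Aᵀ *ᵥ w) ⬝ᵥ (Aᵀ *ᵥ w) := by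
      rw [← Matrix.mulVec_mulVec, Matrix.dotProduct_mulVec, ← Matrix.mulVec_transpose]
    have e2 : w ⬝ᵥ (amin • 1) *ᵥ w = amin * (w ⬝ᵥ w) := by
      rw [Matrix.smul_mulVec, Matrix.one_mulVec, dotProduct_smul, smul_eq_mul]
    rw [e1, e2] at h0
    have e3 : ⟪u, u⟫ = w ⬝ᵥ w := by
      simp [PiLp.inner_apply, dotProduct, hw, RCLike.inner_apply, mul_comm]
      rw [EuclideanSpace.norm_sq_eq]; simp [sq]
    have e4 : ⟪Tt u, Tt u⟫ = (Aᵀ *ᵥ w) ⬝ᵥ (Aᵀ *ᵥ w) := by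
      simp [hTt, Matrix.toEuclideanLin_apply, PiLp.inner_apply, dotProduct, hw, mul_comm]
      rw [EuclideanSpace.norm_sq_eq]; simp [sq]
    rw [e3, e4]
    linarith
  have hTt_inj0 : ∀ u, Tt u = 0 → u = 0 := by
    intro u hu
    have h1 := hkey u
    rw [hu, inner_zero_left] at h1
    have h2 : (0:ℝ) ≤ ⟪u, u⟫ := real_inner_self_nonneg
    have h3 : ⟪u, u⟫ = 0 := by nlinarith
    exact inner_self_eq_zero.mp h3
  have hTt_inj : Function.Injective Tt :=
    LinearMap.ker_eq_bot.mp (LinearMap.ker_eq_bot'.mpr hTt_inj0)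
  have hT_surj : Function.Surjective T := by
    rw [← LinearMap.range_eq_top, ← Submodule.orthogonal_eq_bot_iff, Submodule.eq_bot_iff]
    intro u hu
    have h1 : ⟪T (Tt u), u⟫ = 0 :=
      (Submodule.mem_orthogonal _ u).mp hu _ (LinearMap.mem_range_self T (Tt u))
    have h2 : ⟪Tt u, Tt u⟫ = 0 := by
      rw [adj u (Tt u), real_inner_comm, h1]
    exact hTt_inj0 u (inner_self_eq_zero.mp h2)
  have hrange : ∀ g : EuclideanSpace ℝ (Fin n), (∀ w, T w = 0 → ⟪g, w⟫ = 0) →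
      g ∈ LinearMap.range Tt := by
    intro g hg
    have hker : LinearMap.ker T = (LinearMap.range Tt)ᗮ := by
      ext z
      constructor
      · intro hz
        rw [Submodule.mem_orthogonal]
        rintro _ ⟨u, rfl⟩
        rw [adj, LinearMap.mem_ker.mp hz, inner_zero_right]
      · intro hz
        rw [LinearMap.mem_ker]
        have h1 : ⟪Tt (T z), z⟫ = 0 :=
          (Submodule.mem_orthogonal _ z).mp hz _ (LinearMap.mem_range_self Tt (T z))
        have h2 : ⟪T z, T z⟫ = 0 := by rw [← adj (T z) z, h1]
        exact inner_self_eq_zero.mp h2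
    have hmem : g ∈ (LinearMap.ker T)ᗮ := by
      rw [Submodule.mem_orthogonal]
      intro v hv
      rw [real_inner_comm]
      exact hg v (LinearMap.mem_ker.mp hv)
    rw [hker, Submodule.orthogonal_orthogonal] at hmem
    exact hmem
  -- analysis
  have hfd : Differentiable ℝ f := hf.differentiable one_ne_zero
  have hgi := aux_sc hf hsc
  obtain ⟨x₀, hx₀⟩ := hT_surj b
  set G : ℝ := ‖gradient f x₀‖ with hG
  set R : ℝ := 2 * G / ρ + 1 with hR
  have hRpos : 0 < R := by positivity
  set S : Set (EuclideanSpace ℝ (Fin n)) := {x | T x = b} with hS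
  have hSclosed : IsClosed S := by
    have : Continuous T := T.continuous_of_finiteDimensional
    exact IsClosed.preimage this isClosed_singleton
  have hKcompact : IsCompact (S ∩ Metric.closedBall x₀ R) :=
    (isCompact_closedBall x₀ R).inter_left hSclosed
  have hx₀K : x₀ ∈ S ∩ Metric.closedBall x₀ R :=
    ⟨hx₀, Metric.mem_closedBall_self hRpos.le⟩
  obtain ⟨xs, hxsK, hxs_min⟩ := hKcompact.exists_isMinOn ⟨x₀, hx₀K⟩ hf.continuous.continuousOn
  have hxsb : T xs = b := hxsK.1
  have hmin : ∀ y, T y = b → f xs ≤ f y := by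
    intro y hy
    by_cases hy' : y ∈ Metric.closedBall x₀ R
    · exact hxs_min ⟨hy, hy'⟩
    · have hr : R < ‖y - x₀‖ := by
        rw [Metric.mem_closedBall, dist_eq_norm] at hy'
        linarith [not_le.mp hy']
      have h1 := hgi x₀ y
      have h2 : -(G * ‖y - x₀‖) ≤ ⟪gradient f x₀, y - x₀⟫ := by
        have := abs_real_inner_le_norm (gradient f x₀) (y - x₀)
        rw [← hG] at this
        linarith [neg_abs_le (⟪gradient f x₀, y - x₀⟫ : ℝ)]
      have h3 : f xs ≤ f x₀ := hxs_min hx₀K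
      have hGnn : 0 ≤ G := norm_nonneg _
      have hrpos : 0 < ‖y - x₀‖ := lt_trans hRpos hr
      have h4 : 2 * G / ρ ≤ ‖y - x₀‖ := by
        rw [hR] at hr; linarith
      have h5 : G ≤ ρ / 2 * ‖y - x₀‖ := by
        rw [div_le_iff₀ hρ] at h4; linarith
      have h6 : G * ‖y - x₀‖ ≤ ρ / 2 * ‖y - x₀‖ * ‖y - x₀‖ :=
        mul_le_mul_of_nonneg_right h5 hrpos.le
      have h7 : ρ / 2 * ‖y - x₀‖ ^ 2 = ρ / 2 * ‖y - x₀‖ * ‖y - x₀‖ := by ring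
      linarith
  have hstat : ∀ v, T v = 0 → ⟪gradient f xs, v⟫ = 0 := by
    intro v hv
    have hd := aux_dir v (hfd xs)
    have hloc : IsLocalMin (fun t : ℝ => f (xs + t • v)) 0 := by
      apply Filter.Eventually.of_forall
      intro t
      have hfeas : T (xs + t • v) = b := by
        rw [map_add, _root_.map_smul, hv, smul_zero, add_zero, hxsb]
      simpa using hmin _ hfeas
    exact hloc.hasDerivAt_eq_zero hd
  obtain ⟨ξ, hξ⟩ := hrange (-(gradient f xs)) (fun w hw => by
    rw [inner_neg_left, hstat w hw, neg_zero])
  have hstatp : gradient f xs + Tt ξ = 0 := by rw [hξ]; abel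
  -- strict minimality from stationarity
  have hstrict : ∀ (x : EuclideanSpace ℝ (Fin n)) (ξ' : EuclideanSpace ℝ (Fin m)),
      gradient f x + Tt ξ' = 0 → T x = b →
      ∀ y, T y = b → y ≠ x → f x < f y := by
    intro x ξ' hst hxb y hyb hne
    have h1 := hgi x y
    have h2 : ⟪gradient f x, y - x⟫ = 0 := by
      have hg : gradient f x = -(Tt ξ') := (neg_eq_of_add_eq_zero_left hst).symm
      rw [hg, inner_neg_left, adj, map_sub, hyb, hxb, sub_self, inner_zero_right, neg_zero]
    have h3 : 0 < ρ / 2 * ‖y - x‖ ^ 2 := by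
      have : y - x ≠ 0 := sub_ne_zero.mpr hne
      have : 0 < ‖y - x‖ := norm_pos_iff.mpr this
      positivity
    linarith
  refine ⟨(xs, ξ), ⟨hstatp, hxsb⟩, ?_, ?_⟩
  · rintro ⟨qx, qξ⟩ hq1 hq2
    simp only at hq1 hq2
    have hqx : qx = xs := by
      by_contra hne
      have ha := hstrict qx qξ hq1 hq2 xs hxsb (fun h => hne h.symm)
      have hb := hstrict xs ξ hstatp hxsb qx hq2 hne
      linarith
    have hqξ : qξ = ξ := by
      apply hTt_inj
      have e1 : Tt qξ = -(gradient f qx) := by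
        rw [← neg_eq_of_add_eq_zero_right hq1]
      rw [e1, hqx, hξ]
    rw [Prod.mk.injEq]
    exact ⟨hqx, hqξ⟩
  · intro x hx hne
    exact hstrict xs ξ hstatp hxsb x hx hne
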